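/- If φ : ℝ₊ → ℝ satisfies φ(t) > 0 for all t > 0 and the Beurling functional equation φ(v + u·φ(v)) = φ(u)·φ(v) for all u, v > 0, then φ is continuous on ℝ₊, and either φ(t) > 1 for all t > 0, or φ(t) = 1 for all t > 0. -/

import Mathlib

theorem bfe_positive_solutions_dichotomy
    (φ : ℝ → ℝ)
    (hpos : ∀ x : ℝ, 0 < x → 0 < φ x)
    (hBFE : ∀ u v : ℝ, 0 < u → 0 < v → φ (v + u * φ v) = φ u * φ v) :
    ContinuousOn φ (Set.Ioi 0) ∧
      ((∀ t : ℝ, 0 < t → 1 < φ t) ∨ (∀ t : ℝ, 0 < t → φ t = 1)) := by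
  -- Step 1: φ ≥ 1 everywhere on (0,∞).
  have h1 : ∀ t : ℝ, 0 < t → 1 ≤ φ t := by
    intro t ht
    by_contra h
    push_neg at h
    have h1t : 0 < 1 - φ t := by linarith
    set u := t / (1 - φ t) with hu
    have hu0 : 0 < u := div_pos ht h1t
    have key : t + u * φ t = u := by
      rw [hu]; field_simp; ring
    have heq := hBFE u t hu0 ht
    rw [key] at heq
    have hφu := hpos u hu0
    nlinarith
  -- Key identity: for 0 < v < x, φ x = φ ((x - v)/φ v) * φ v.
  have hid : ∀ v x : ℝ, 0 < v → v < x → φ x = φ ((x - v) / φ v) * φ v := by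
    intro v x hv hvx
    have hφv := hpos v hv
    have hu : 0 < (x - v) / φ v := div_pos (by linarith) hφv
    have heq := hBFE ((x - v) / φ v) v hu hv
    rw [show v + (x - v) / φ v * φ v = x by field_simp; ring] at heq
    exact heq
  -- Monotonicity.
  have hmono : ∀ v x : ℝ, 0 < v → v < x → φ v ≤ φ x := by
    intro v x hv hvx
    have hφv := hpos v hv
    have h1' := h1 ((x - v) / φ v) (div_pos (by linarith) hφv)
    rw [hid v x hv hvx]
    nlinarith
  -- φ tends to 1 at 0⁺.
  have h0 : ∀ ε : ℝ, 0 < ε → ∃ δ > 0, ∀ t : ℝ, 0 < t → t < δ → φ t < 1 + ε := by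
    intro ε hε
    by_contra h
    push_neg at h
    have hall : ∀ t : ℝ, 0 < t → 1 + ε ≤ φ t := by
      intro t ht
      obtain ⟨s, hs0, hst, hsφ⟩ := h t ht
      exact le_trans hsφ (hmono s t hs0 hst)
    have hpow : ∀ n : ℕ, ∀ t : ℝ, 0 < t → (1 + ε) ^ n ≤ φ t := by
      intro n
      induction n with
      | zero => intro t ht; simpa using h1 t ht
      | succ n ih =>
        intro t ht
        have hv : 0 < t / 2 := by linarith
        have hφv := hpos _ hv
        have harg : 0 < (t - t / 2) / φ (t / 2) := div_pos (by linarith) hφv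
        rw [hid (t / 2) t hv (by linarith)]
        have hA := hall _ harg
        have hB := ih (t / 2) hv
        have hP : (0 : ℝ) ≤ (1 + ε) ^ n := by positivity
        rw [pow_succ]
        nlinarith
    obtain ⟨n, hn⟩ := pow_unbounded_of_one_lt (φ 1) (by linarith : (1 : ℝ) < 1 + ε)
    exact absurd (hpow n 1 one_pos) (not_le.mpr hn)
  -- Continuity on (0,∞).
  have hcont : ContinuousOn φ (Set.Ioi 0) := by
    rw [Metric.continuousOn_iff]
    intro v hv ε hε
    have hv0 : (0 : ℝ) < v := hv
    have hφv := hpos v hv0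
    have h1v := h1 v hv0
    have hε' : 0 < ε / (φ v + 1) := by positivity
    obtain ⟨δ', hδ'0, hδ'⟩ := h0 _ hε'
    refine ⟨min δ' v, lt_min hδ'0 hv0, ?_⟩
    intro y hy hdist
    have hy0 : (0 : ℝ) < y := hy
    rw [Real.dist_eq] at hdist ⊢
    have hεφ : ε / (φ v + 1) * φ v < ε := by
      rw [div_mul_eq_mul_div, div_lt_iff₀ (by linarith)]
      nlinarith
    have hdδ : |y - v| < δ' := lt_of_lt_of_le hdist (min_le_left _ _)
    rw [abs_sub_lt_iff] at hdδ
    rcases lt_trichotomy y v with hlt | heq | hgt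
    · have hφy := hpos y hy0
      have h1y := h1 y hy0
      have hyv := hmono y v hy0 hlt
      have harg0 : 0 < (v - y) / φ y := div_pos (by linarith) hφy
      have hargle : (v - y) / φ y ≤ v - y := div_le_self (by linarith) h1y
      have hsm := hδ' _ harg0 (by linarith [hdδ.2])
      have hidv := hid y v hy0 hlt
      rw [abs_sub_lt_iff]
      constructor <;> nlinarith
    · rw [heq]; simpa using hε
    · have harg0 : 0 < (y - v) / φ v := div_pos (by linarith) hφv
      have hargle : (y - v) / φ v ≤ y - v := div_le_self (by linarith) h1v
      have hsm := hδ' _ harg0 (by linarith [hdδ.1])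
      have hvy := hmono v y hv0 hgt
      have hidv := hid v y hv0 hgt
      rw [abs_sub_lt_iff]
      constructor <;> nlinarith
  refine ⟨hcont, ?_⟩
  by_cases hex : ∃ a : ℝ, 0 < a ∧ φ a = 1
  · right
    obtain ⟨a, ha0, ha1⟩ := hex
    have hper : ∀ x : ℝ, 0 < x → φ (x + a) = φ x := by
      intro x hx
      have heq := hBFE x a hx ha0
      rw [ha1] at heq
      rw [add_comm]
      simpa using heq
    have hpern : ∀ n : ℕ, ∀ x : ℝ, 0 < x → φ (x + n * a) = φ x := by
      intro n
      induction n with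
      | zero => intro x hx; simp
      | succ n ih =>
        intro x hx
        have hx' : 0 < x + n * a := by positivity
        have := hper (x + n * a) hx'
        rw [show x + (↑(n + 1)) * a = x + ↑n * a + a by push_cast; ring]
        rw [this, ih x hx]
    have hconst : ∀ x y : ℝ, 0 < x → x < y → φ x = φ y := by
      intro x y hx hxy
      obtain ⟨n, hn⟩ := exists_nat_gt ((y - x) / a)
      have hny : y < x + n * a := by
        rw [div_lt_iff₀ ha0] at hn; linarith
      refine le_antisymm (hmono x y hx hxy) ?_
      calc φ y ≤ φ (x + n * a) := hmono y _ (by linarith) hny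
        _ = φ x := hpern n x hx
    intro t ht
    rcases lt_trichotomy t a with h | h | h
    · rw [hconst t a ht h, ha1]
    · rw [h, ha1]
    · rw [← hconst a t ha0 h, ha1]
  · left
    push_neg at hex
    intro t ht
    exact lt_of_le_of_ne (h1 t ht) (Ne.symm (hex t ht))
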